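/- Suppose q : ℕ → ℝ takes values in (0,1) and every subsequence (q_{n_k}) for which ∑_k (q_{n_k})^M < ∞ for some positive integer M has unbounded gaps (i.e., sup_k (n_{k+1} − n_k) = ∞). Then for every positive integer a and every L ≥ 1, letting q̄_n = min{q_{nL+1},…,q_{nL+L}}, the series ∑_{n=0}^∞ (q̄_n)^a diverges. -/
import Mathlib


theorem block_min_diverges_of_unbounded_gaps
    (q : ℕ → ℝ) (hq : ∀ n, q n ∈ Set.Ioo (0 : ℝ) 1)
    (hgaps : ∀ n : ℕ → ℕ, StrictMono n →
      (∃ M : ℕ, 1 ≤ M ∧ Summable (fun k => q (n k) ^ M)) →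
      ∀ B : ℕ, ∃ k, B < n (k + 1) - n k)
    (a L : ℕ) (ha : 1 ≤ a) (hL : 1 ≤ L)
    (qbar : ℕ → ℝ)
    (hqbar : ∀ n, qbar n = sInf {x | ∃ j, 1 ≤ j ∧ j ≤ L ∧ x = q (n * L + j)}) :
    ¬ Summable (fun n => qbar n ^ a) := by
  intro hsum
  -- the set is finite and nonempty, so sInf is attained
  have hmem : ∀ n : ℕ, ∃ j, 1 ≤ j ∧ j ≤ L ∧ qbar n = q (n * L + j) := by
    intro n
    have hfin : ({x | ∃ j, 1 ≤ j ∧ j ≤ L ∧ x = q (n * L + j)} : Set ℝ).Finite := by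
      have : ({x | ∃ j, 1 ≤ j ∧ j ≤ L ∧ x = q (n * L + j)} : Set ℝ)
          = (fun j => q (n * L + j)) '' (Set.Icc 1 L) := by
        ext x
        simp only [Set.mem_setOf_eq, Set.mem_image, Set.mem_Icc]
        constructor
        · rintro ⟨j, h1, h2, rfl⟩; exact ⟨j, ⟨h1, h2⟩, rfl⟩
        · rintro ⟨j, ⟨h1, h2⟩, rfl⟩; exact ⟨j, h1, h2, rfl⟩
      rw [this]
      exact (Set.finite_Icc 1 L).image _
    have hne : ({x | ∃ j, 1 ≤ j ∧ j ≤ L ∧ x = q (n * L + j)} : Set ℝ).Nonempty :=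
      ⟨q (n * L + 1), 1, le_refl 1, hL, rfl⟩
    have := hne.csInf_mem hfin
    rw [← hqbar n] at this
    exact this
  choose j hj1 hjL hjq using hmem
  set m : ℕ → ℕ := fun n => n * L + j n with hm
  have hmono : StrictMono m := by
    apply strictMono_nat_of_lt_succ
    intro n
    have h1 := hj1 (n + 1)
    have h2 := hjL n
    simp only [hm]
    have : n * L + L ≤ (n + 1) * L := by ring_nf; omega
    omega
  have hsum' : Summable (fun k => q (m k) ^ a) := by
    apply hsum.congr
    intro k
    rw [hjq k]
  obtain ⟨k, hk⟩ := hgaps m hmono ⟨a, ha, hsum'⟩ (2 * L)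
  have h1 := hj1 (k + 1)
  have h2 := hjL (k + 1)
  have h3 := hj1 k
  simp only [hm] at hk
  have : (k + 1) * L = k * L + L := by ring
  omega
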